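/- The image of the Chiang-type lagrangian 𝓛₂ under the toric moment map (μ₁, μ₂) is exactly the line segment { (−1/2 − 2t, t) : t ∈ [−1/4, 0] } ⊂ ℝ²; in particular every point of 𝓛₂ satisfies μ₁ + 2μ₂ = −1/2, equivalently every homogeneous representative (z₀,z₁,z₂) of a point of 𝓛₂ satisfies |z₀| = |z₂|. -/

import Mathlib

open Complex

/-- The vector `(X - iY, √2 i Z, X + iY)` in `ℂ³`. -/
noncomputable def sphereVec (X Y Z : ℝ) : Fin 3 → ℂ :=
  ![(X : ℂ) - Complex.I * Y, (Real.sqrt 2 : ℂ) * Complex.I * Z, (X : ℂ) + Complex.I * Y]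

lemma sphereVec_ne_zero {X Y Z : ℝ} (h : X ^ 2 + Y ^ 2 + Z ^ 2 = 1) :
    sphereVec X Y Z ≠ 0 := by
  intro h0
  have h0' : (X : ℂ) - Complex.I * Y = 0 := congrFun h0 0
  have h2' : (X : ℂ) + Complex.I * Y = 0 := congrFun h0 2
  have h1' : (Real.sqrt 2 : ℂ) * Complex.I * Z = 0 := congrFun h0 1
  have hX : X = 0 := by
    have := congrArg Complex.re (by linear_combination h0' + h2' : (2 : ℂ) * X = 0)
    simpa using this
  have hY : Y = 0 := by
    have := congrArg Complex.im (by linear_combination h2' - h0' : (2 : ℂ) * Complex.I * Y = 0)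
    simpa using this
  have hZ : Z = 0 := by
    rcases mul_eq_zero.mp h1' with h' | h'
    · rcases mul_eq_zero.mp h' with h'' | h''
      · exact absurd h'' (by simp [Complex.ext_iff, Real.sqrt_eq_zero'])
      · exact absurd h'' Complex.I_ne_zero
    · exact_mod_cast h'
  rw [hX, hY, hZ] at h
  norm_num at h

/-- The Chiang-type lagrangian `𝓛₂ ⊆ ℙ(ℂ³)`, in its real description. -/
noncomputable def ChiangL2 : Set (Projectivization ℂ (Fin 3 → ℂ)) :=
  {P | ∃ (X Y Z : ℝ) (h : X ^ 2 + Y ^ 2 + Z ^ 2 = 1),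
    P = Projectivization.mk ℂ (sphereVec X Y Z) (sphereVec_ne_zero h)}

/-- The moment map `μ₂` on (homogeneous coordinate vectors for) `ℙ(ℂ³)`:
`μ₂(z) = -|z₂|² / (2(|z₀|² + |z₁|² + |z₂|²))`. -/
noncomputable def mu2 (z : Fin 3 → ℂ) : ℝ :=
  -‖z 2‖ ^ 2 /
    (2 * (‖z 0‖ ^ 2 + ‖z 1‖ ^ 2 + ‖z 2‖ ^ 2))

/-- The moment map `μ₁` on (homogeneous coordinate vectors for) `ℙ(ℂ³)`:
`μ₁(z) = -|z₁|² / (2(|z₀|² + |z₁|² + |z₂|²))`. -/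
noncomputable def mu1 (z : Fin 3 → ℂ) : ℝ :=
  -‖z 1‖ ^ 2 /
    (2 * (‖z 0‖ ^ 2 + ‖z 1‖ ^ 2 + ‖z 2‖ ^ 2))

/-- `μ₂` as a function on the projective plane, via the canonical representative
(`μ₂` on vectors is scale-invariant, so this is the descended function). -/
noncomputable def mu2P (P : Projectivization ℂ (Fin 3 → ℂ)) : ℝ := mu2 P.rep

/-- `μ₁` as a function on the projective plane, via the canonical representative
(`μ₁` on vectors is scale-invariant, so this is the descended function). -/
noncomputable def mu1P (P : Projectivization ℂ (Fin 3 → ℂ)) : ℝ := mu1 P.rep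

/-- The image of `𝓛₂` under the toric moment map `(μ₁, μ₂)` is exactly the
segment `{(-1/2 - 2t, t) : t ∈ [-1/4, 0]}`; in particular every point of `𝓛₂` satisfies
`μ₁ + 2μ₂ = -1/2`, equivalently every homogeneous representative `(z₀, z₁, z₂)` of a point
of `𝓛₂` satisfies `|z₀| = |z₂|`. -/
lemma mu1_smul (a : ℂ) (ha : a ≠ 0) (z : Fin 3 → ℂ) : mu1 (a • z) = mu1 z := by
  have hc : ‖a‖ ^ 2 ≠ 0 := pow_ne_zero _ (by simpa using ha)
  unfold mu1
  simp only [Pi.smul_apply, smul_eq_mul, map_mul, norm_mul, mul_pow]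
  rw [show ∀ x y u : ℝ, -(‖a‖ ^ 2 * x) /
      (2 * (‖a‖ ^2 * u + ‖a‖ ^2 * x + ‖a‖ ^2 * y)) =
      (‖a‖ ^2 * -x) / (‖a‖ ^2 * (2*(u + x + y))) from
    fun x y u => by ring_nf]
  rw [mul_div_mul_left _ _ hc]

lemma mu2_smul (a : ℂ) (ha : a ≠ 0) (z : Fin 3 → ℂ) : mu2 (a • z) = mu2 z := by
  have hc : ‖a‖ ^ 2 ≠ 0 := pow_ne_zero _ (by simpa using ha)
  unfold mu2
  simp only [Pi.smul_apply, smul_eq_mul, map_mul, norm_mul, mul_pow]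
  rw [show ∀ x y u : ℝ, -(‖a‖ ^ 2 * x) /
      (2 * (‖a‖ ^2 * u + ‖a‖ ^2 * y + ‖a‖ ^2 * x)) =
      (‖a‖ ^2 * -x) / (‖a‖ ^2 * (2*(u + y + x))) from
    fun x y u => by ring_nf]
  rw [mul_div_mul_left _ _ hc]

lemma rep_eq_smul (z : Fin 3 → ℂ) (hz : z ≠ 0) :
    ∃ a : ℂˣ, (a : ℂ) • z = (Projectivization.mk ℂ z hz).rep := by
  have h := Projectivization.mk_rep (Projectivization.mk ℂ z hz)
  rw [Projectivization.mk_eq_mk_iff] at h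
  obtain ⟨a, ha⟩ := h
  exact ⟨a, by simpa [Units.smul_def] using ha⟩

lemma mu1P_mk (z : Fin 3 → ℂ) (hz : z ≠ 0) : mu1P (Projectivization.mk ℂ z hz) = mu1 z := by
  obtain ⟨a, ha⟩ := rep_eq_smul z hz
  rw [mu1P, ← ha, mu1_smul _ a.ne_zero]

lemma mu2P_mk (z : Fin 3 → ℂ) (hz : z ≠ 0) : mu2P (Projectivization.mk ℂ z hz) = mu2 z := by
  obtain ⟨a, ha⟩ := rep_eq_smul z hz
  rw [mu2P, ← ha, mu2_smul _ a.ne_zero]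

lemma sphereVec_abs (X Y Z : ℝ) :
    ‖sphereVec X Y Z 0‖ ^ 2 = X^2 + Y^2 ∧
    ‖sphereVec X Y Z 1‖ ^ 2 = 2 * Z^2 ∧
    ‖sphereVec X Y Z 2‖ ^ 2 = X^2 + Y^2 := by
  simp only [sphereVec, Matrix.cons_val_zero, Matrix.cons_val_one, Matrix.head_cons,
    Matrix.cons_val_two, Matrix.tail_cons, Complex.sq_norm, Complex.normSq_apply]
  norm_num [Complex.add_re, Complex.add_im, Complex.sub_re, Complex.sub_im,
    Complex.mul_re, Complex.mul_im]
  refine ⟨by ring, ?_, by ring⟩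
  nlinarith [Real.sq_sqrt (by norm_num : (2:ℝ) ≥ 0)]

lemma mu_vals {X Y Z : ℝ} (h : X ^ 2 + Y ^ 2 + Z ^ 2 = 1) :
    mu1 (sphereVec X Y Z) = -(Z^2)/2 ∧ mu2 (sphereVec X Y Z) = -(X^2+Y^2)/4 := by
  obtain ⟨h0, h1, h2⟩ := sphereVec_abs X Y Z
  unfold mu1 mu2
  rw [h0, h1, h2]
  have hd : X^2 + Y^2 + 2*Z^2 + (X^2+Y^2) = 2 * (X^2+Y^2+Z^2) := by ring
  constructor
  · rw [show X^2+Y^2+(2*Z^2)+(X^2+Y^2) = 2*(X^2+Y^2+Z^2) by ring, h]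
    ring
  · rw [show X^2+Y^2+(2*Z^2)+(X^2+Y^2) = 2*(X^2+Y^2+Z^2) by ring, h]
    ring

theorem stmt_8 :
    (fun P => (mu1P P, mu2P P)) '' ChiangL2 =
      {q : ℝ × ℝ | ∃ t ∈ Set.Icc (-(1 / 4) : ℝ) 0, q = (-(1 / 2) - 2 * t, t)} ∧
    (∀ P ∈ ChiangL2, mu1P P + 2 * mu2P P = -(1 / 2)) ∧
    (∀ P ∈ ChiangL2, ∀ (z : Fin 3 → ℂ) (hz : z ≠ 0),
      Projectivization.mk ℂ z hz = P → ‖z 0‖ = ‖z 2‖) := by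
  refine ⟨?_, ?_, ?_⟩
  · ext ⟨p, q⟩
    constructor
    · rintro ⟨P, ⟨X, Y, Z, h, rfl⟩, hPq⟩
      obtain ⟨hm1, hm2⟩ := mu_vals h
      simp only [mu1P_mk, mu2P_mk, hm1, hm2] at hPq
      refine ⟨-(X^2+Y^2)/4, ⟨?_, ?_⟩, ?_⟩
      · nlinarith [sq_nonneg Z]
      · nlinarith [sq_nonneg X, sq_nonneg Y]
      · rw [← hPq]
        have : -(Z^2)/2 = -(1/2) - 2 * (-(X^2+Y^2)/4) := by nlinarith
        simp [this]
    · rintro ⟨t, ⟨ht1, ht2⟩, hq⟩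
      set X := Real.sqrt (-(4*t)) with hX
      set Z := Real.sqrt (1 + 4*t) with hZ
      have hX2 : X ^ 2 = -(4*t) := Real.sq_sqrt (by linarith)
      have hZ2 : Z ^ 2 = 1 + 4*t := Real.sq_sqrt (by linarith)
      have h : X ^ 2 + (0:ℝ) ^ 2 + Z ^ 2 = 1 := by rw [hX2, hZ2]; ring
      refine ⟨Projectivization.mk ℂ (sphereVec X 0 Z) (sphereVec_ne_zero h),
        ⟨X, 0, Z, h, rfl⟩, ?_⟩
      obtain ⟨hm1, hm2⟩ := mu_vals h
      rw [hq]
      simp only [mu1P_mk, mu2P_mk, hm1, hm2, hX2, hZ2, Prod.mk.injEq]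
      constructor <;> ring
  · rintro P ⟨X, Y, Z, h, rfl⟩
    obtain ⟨hm1, hm2⟩ := mu_vals h
    rw [mu1P_mk, mu2P_mk, hm1, hm2]
    nlinarith
  · rintro P ⟨X, Y, Z, h, rfl⟩ z hz hmk
    rw [Projectivization.mk_eq_mk_iff] at hmk
    obtain ⟨a, ha⟩ := hmk
    have h0 : z 0 = (a : ℂ) * sphereVec X Y Z 0 := by
      rw [← ha]; simp [Units.smul_def]
    have h2 : z 2 = (a : ℂ) * sphereVec X Y Z 2 := by
      rw [← ha]; simp [Units.smul_def]
    obtain ⟨s0, s1, s2⟩ := sphereVec_abs X Y Z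
    have : ‖sphereVec X Y Z 0‖ = ‖sphereVec X Y Z 2‖ := by
      have := s0.trans s2.symm
      exact (pow_left_inj₀ (norm_nonneg _) (norm_nonneg _) two_ne_zero).mp this
    rw [h0, h2, norm_mul, norm_mul, this]
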